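/- arXiv:2209.11947 — 3 statements merged into one kernel-verified Lean document; each statement's English description precedes it below -/
import Mathlib

section
/- If a simple graph G contains no subgraph isomorphic to C_6^△, then for every vertex v of G, the subgraph of G induced on the neighborhood N(v) contains no path P_6 on 6 vertices as a subgraph. -/
open SimpleGraph

open scoped Classical in
/-- Real adjacency matrix of a simple graph. -/
noncomputable def adjMat {V : Type*} [Fintype V] (G : SimpleGraph V) : Matrix V V ℝ :=
  Matrix.of fun u v => if G.Adj u v then (1 : ℝ) else 0

/-- `G` contains a subgraph isomorphic to `F`. -/
def Copies {α β : Type*} (F : SimpleGraph α) (G : SimpleGraph β) : Prop :=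
  ∃ f : F →g G, Function.Injective f

/-- The join `K_k ∇ t·K_1`. -/
def cliqueJoinIndep (k t : ℕ) : SimpleGraph (Fin k ⊕ Fin t) where
  Adj u v := u ≠ v ∧ (u.isLeft = true ∨ v.isLeft = true)
  symm := ⟨fun u v ⟨h1, h2⟩ => ⟨h1.symm, h2.symm⟩⟩
  loopless := ⟨fun u ⟨h, _⟩ => h rfl⟩

instance (k t : ℕ) : DecidableRel (cliqueJoinIndep k t).Adj := fun u v =>
  inferInstanceAs (Decidable (u ≠ v ∧ (u.isLeft = true ∨ v.isLeft = true)))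

/-- `C_t^△`: the cycle `C_t` plus one extra vertex joined to the adjacent
vertices `0` and `1` of the cycle. -/
def cycTri (t : ℕ) : SimpleGraph (Fin t ⊕ Unit) :=
  SimpleGraph.fromRel (fun u v =>
    match u, v with
    | .inl i, .inl j => (cycleGraph t).Adj i j
    | .inl i, .inr _ => i.val = 0 ∨ i.val = 1
    | .inr _, _ => False)

instance cycTri_decAdj (t : ℕ) : DecidableRel (cycTri t).Adj := fun a b => by
  rcases a with a | a <;> rcases b with b | b
  · exact decidable_of_iff (Sum.inl a ≠ Sum.inl b ∧
      ((cycleGraph t).Adj a b ∨ (cycleGraph t).Adj b a))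
      ((SimpleGraph.fromRel_adj (fun (u v : Fin t ⊕ Unit) => match u, v with
        | .inl i, .inl j => (cycleGraph t).Adj i j
        | .inl i, .inr _ => i.val = 0 ∨ i.val = 1
        | .inr _, _ => False) (Sum.inl a) (Sum.inl b)).symm)
  · exact decidable_of_iff (Sum.inl a ≠ Sum.inr b ∧ ((a.val = 0 ∨ a.val = 1) ∨ False))
      ((SimpleGraph.fromRel_adj (fun (u v : Fin t ⊕ Unit) => match u, v with
        | .inl i, .inl j => (cycleGraph t).Adj i j
        | .inl i, .inr _ => i.val = 0 ∨ i.val = 1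
        | .inr _, _ => False) (Sum.inl a) (Sum.inr b)).symm)
  · exact decidable_of_iff (Sum.inr a ≠ Sum.inl b ∧ (False ∨ (b.val = 0 ∨ b.val = 1)))
      ((SimpleGraph.fromRel_adj (fun (u v : Fin t ⊕ Unit) => match u, v with
        | .inl i, .inl j => (cycleGraph t).Adj i j
        | .inl i, .inr _ => i.val = 0 ∨ i.val = 1
        | .inr _, _ => False) (Sum.inr a) (Sum.inl b)).symm)
  · exact decidable_of_iff (Sum.inr a ≠ Sum.inr b ∧ (False ∨ False))
      ((SimpleGraph.fromRel_adj (fun (u v : Fin t ⊕ Unit) => match u, v with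
        | .inl i, .inl j => (cycleGraph t).Adj i j
        | .inl i, .inr _ => i.val = 0 ∨ i.val = 1
        | .inr _, _ => False) (Sum.inr a) (Sum.inr b)).symm)

theorem neighborhood_P6_free_of_C6tri_free {V : Type*} (G : SimpleGraph V)
    (hfree : ¬ Copies (cycTri 6) G) (v : V) :
    ¬ Copies (pathGraph 6) (G.induce (G.neighborSet v)) := by
  rintro ⟨f, hf⟩
  apply hfree
  have hadj : ∀ i j : Fin 6, (pathGraph 6).Adj i j → G.Adj (f i).1 (f j).1 := fun i j h =>
    f.map_adj h
  have hv : ∀ i : Fin 6, G.Adj v (f i).1 := fun i => (f i).2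
  have hne : ∀ i j : Fin 6, i ≠ j → (f i).1 ≠ (f j).1 := fun i j h e => h (hf (Subtype.ext e))
  have hnv : ∀ i : Fin 6, (f i).1 ≠ v := fun i => (hv i).ne'
  have e01 : G.Adj (f 0).1 (f 1).1 := hadj 0 1 (pathGraph_adj.mpr (Or.inl rfl))
  have e12 : G.Adj (f 1).1 (f 2).1 := hadj 1 2 (pathGraph_adj.mpr (Or.inl rfl))
  have e23 : G.Adj (f 2).1 (f 3).1 := hadj 2 3 (pathGraph_adj.mpr (Or.inl rfl))
  have e34 : G.Adj (f 3).1 (f 4).1 := hadj 3 4 (pathGraph_adj.mpr (Or.inl rfl))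
  have e45 : G.Adj (f 4).1 (f 5).1 := hadj 4 5 (pathGraph_adj.mpr (Or.inl rfl))
  let m : Fin 6 ⊕ Unit → V := fun x =>
    match x with
    | .inl 0 => (f 4).1
    | .inl 1 => v
    | .inl 2 => (f 0).1
    | .inl 3 => (f 1).1
    | .inl 4 => (f 2).1
    | .inl 5 => (f 3).1
    | .inr _ => (f 5).1
  refine ⟨⟨m, ?_⟩, ?_⟩
  · rintro (a | a) (b | b) hab
    · fin_cases a <;> fin_cases b <;> first
        | exact absurd hab (by decide)
        | exact e01 | exact e01.symm | exact e12 | exact e12.symm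
        | exact e23 | exact e23.symm | exact e34 | exact e34.symm
        | exact e45 | exact e45.symm
        | exact hv _ | exact (hv _).symm
    · cases b; fin_cases a <;> first
        | exact absurd hab (by decide)
        | exact e45 | exact hv 5
    · cases a; fin_cases b <;> first
        | exact absurd hab (by decide)
        | exact e45.symm | exact (hv 5).symm
    · exact absurd hab.2 (by simp)
  · intro a b hab
    have hab' : m a = m b := hab
    rcases a with a | a <;> rcases b with b | b
    · fin_cases a <;> fin_cases b <;> simp only [m] at hab' <;> first
        | rfl
        | exact absurd hab' (hne _ _ (by decide))
        | exact absurd hab' (hnv _)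
        | exact absurd hab'.symm (hnv _)
    · cases b; fin_cases a <;> simp only [m] at hab' <;> first
        | exact absurd hab' (hne _ _ (by decide))
        | exact absurd hab' (hnv _)
        | exact absurd hab'.symm (hnv _)
    · cases a; fin_cases b <;> simp only [m] at hab' <;> first
        | exact absurd hab' (hne _ _ (by decide))
        | exact absurd hab' (hnv _)
        | exact absurd hab'.symm (hnv _)
    · cases a; cases b; rfl
end

section
/- For n ≥ 6, the graph K_2 ∇ ((n-2)·K_1) (two adjacent vertices joined to n-2 independent vertices) is connected, has exactly 2n - 3 edges, and contains no path on 6 vertices as a subgraph. -/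
open SimpleGraph

theorem K2_join_indep_properties (n : ℕ) (hn : 6 ≤ n) :
    (cliqueJoinIndep 2 (n - 2)).Connected ∧
      (cliqueJoinIndep 2 (n - 2)).edgeFinset.card = 2 * n - 3 ∧
      ¬ Copies (pathGraph 6) (cliqueJoinIndep 2 (n - 2)) := by
  set G := cliqueJoinIndep 2 (n-2) with hG
  refine ⟨?_, ?_, ?_⟩
  · -- connected
    constructor
    · intro u v
      have key : ∀ w : Fin 2 ⊕ Fin (n-2), G.Reachable w (Sum.inl 0) := by
        intro w
        by_cases h : w = Sum.inl 0
        · exact h ▸ Reachable.refl _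
        · exact (show G.Adj w (Sum.inl 0) from ⟨h, Or.inr rfl⟩).reachable
      exact (key u).trans (key v).symm
  · -- edge count
    have hL : ∀ i : Fin 2, G.neighborFinset (Sum.inl i) = Finset.univ.erase (Sum.inl i) := by
      intro i; ext v
      simp [SimpleGraph.mem_neighborFinset, hG, cliqueJoinIndep, ne_comm]
    have hR : ∀ j : Fin (n-2), G.neighborFinset (Sum.inr j) =
        {Sum.inl 0, Sum.inl 1} := by
      intro j; ext v
      rcases v with a | b
      · simp [SimpleGraph.mem_neighborFinset, hG, cliqueJoinIndep]
        omega
      · simp [SimpleGraph.mem_neighborFinset, hG, cliqueJoinIndep]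
    have hdL : ∀ i : Fin 2, G.degree (Sum.inl i) = n - 1 := by
      intro i
      rw [SimpleGraph.degree, hL i, Finset.card_erase_of_mem (Finset.mem_univ _),
        Finset.card_univ]
      simp [Fintype.card_sum]
      omega
    have hdR : ∀ j : Fin (n-2), G.degree (Sum.inr j) = 2 := by
      intro j
      rw [SimpleGraph.degree, hR j]
      rw [Finset.card_insert_of_notMem (by simp), Finset.card_singleton]
    have hsum := G.sum_degrees_eq_twice_card_edges
    rw [Fintype.sum_sum_type] at hsum
    simp only [hdL, hdR, Finset.sum_const, Finset.card_univ, Fintype.card_fin,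
      smul_eq_mul] at hsum
    have hc : (cliqueJoinIndep 2 (n-2)).edgeFinset.card = G.edgeFinset.card := rfl
    rw [hc]
    omega
  · -- no P6
    rintro ⟨f, hf⟩
    have a01 : G.Adj (f 0) (f 1) := f.map_adj (by rw [pathGraph_adj]; decide)
    have a23 : G.Adj (f 2) (f 3) := f.map_adj (by rw [pathGraph_adj]; decide)
    have a45 : G.Adj (f 4) (f 5) := f.map_adj (by rw [pathGraph_adj]; decide)
    -- pick a left endpoint of each edge
    have pick : ∀ u v : Fin 2 ⊕ Fin (n-2), G.Adj u v →
        ∃ a : Fin 2, u = Sum.inl a ∨ v = Sum.inl a := by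
      rintro u v ⟨-, h | h⟩
      · rcases u with a | b
        · exact ⟨a, Or.inl rfl⟩
        · simp at h
      · rcases v with a | b
        · exact ⟨a, Or.inr rfl⟩
        · simp at h
    obtain ⟨a, ha⟩ := pick _ _ a01
    obtain ⟨b, hb⟩ := pick _ _ a23
    obtain ⟨c, hc⟩ := pick _ _ a45
    -- the three left endpoints are pairwise distinct
    have hab : a ≠ b := by
      rintro rfl
      rcases ha with h1 | h1 <;> rcases hb with h2 | h2 <;>
        exact absurd (hf (h1.trans h2.symm)) (by decide)
    have hac : a ≠ c := by
      rintro rfl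
      rcases ha with h1 | h1 <;> rcases hc with h2 | h2 <;>
        exact absurd (hf (h1.trans h2.symm)) (by decide)
    have hbc : b ≠ c := by
      rintro rfl
      rcases hb with h1 | h1 <;> rcases hc with h2 | h2 <;>
        exact absurd (hf (h1.trans h2.symm)) (by decide)
    have : a.val < 2 := a.isLt
    have : b.val < 2 := b.isLt
    have : c.val < 2 := c.isLt
    have hab' : a.val ≠ b.val := fun h => hab (Fin.ext h)
    have hac' : a.val ≠ c.val := fun h => hac (Fin.ext h)
    have hbc' : b.val ≠ c.val := fun h => hbc (Fin.ext h)
    omega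
end

section
/- Let G be a C_6^△-free graph and let v be a vertex of G. If the induced subgraph G[N(v)] contains a copy of K_5 as a component, then any vertex w at distance 2 from v has at most one neighbor inside that K_5. -/
open SimpleGraph

theorem at_most_one_neighbor_in_K5_component {V : Type*} [Fintype V] [DecidableEq V]
    (G : SimpleGraph V) [DecidableRel G.Adj]
    (hfree : ¬ Copies (cycTri 6) G) (v : V)
    (S : Finset V) (hS5 : S.card = 5)
    (hSnbr : ∀ a ∈ S, G.Adj v a)
    (hclique : ∀ a ∈ S, ∀ b ∈ S, a ≠ b → G.Adj a b)
    (hcomp : ∀ a ∈ S, ∀ b : V, G.Adj v b → G.Adj a b → b ∈ S)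
    (w : V) (hw : G.dist v w = 2) :
    (G.neighborFinset w ∩ S).card ≤ 1 := by
  by_contra hcard
  push_neg at hcard
  obtain ⟨a, ha, b, hb, hab⟩ := Finset.one_lt_card.mp hcard
  simp only [Finset.mem_inter, SimpleGraph.mem_neighborFinset] at ha hb
  obtain ⟨hwa, haS⟩ := ha
  obtain ⟨hwb, hbS⟩ := hb
  have hvw : ¬ G.Adj v w := fun h => by
    rw [← SimpleGraph.dist_eq_one_iff_adj] at h; omega
  have hvw' : v ≠ w := fun h => by subst h; simp [SimpleGraph.dist_self] at hw
  have hwS : w ∉ S := fun h => hvw (hSnbr w h)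
  have hvS : v ∉ S := fun h => (G.loopless.irrefl v) (hSnbr v h)
  -- extract c, d, e
  have hT : (S \ {a, b}).card = 3 := by
    rw [Finset.card_sdiff_of_subset (by
      intro x hx
      simp only [Finset.mem_insert, Finset.mem_singleton] at hx
      rcases hx with rfl | rfl <;> assumption)]
    rw [hS5, Finset.card_insert_of_notMem (by simpa using hab), Finset.card_singleton]
  obtain ⟨c, d, e, hcd, hce, hde, hTeq⟩ := Finset.card_eq_three.mp hT
  have hcT : c ∈ S \ {a, b} := by rw [hTeq]; simp
  have hdT : d ∈ S \ {a, b} := by rw [hTeq]; simp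
  have heT : e ∈ S \ {a, b} := by rw [hTeq]; simp
  simp only [Finset.mem_sdiff, Finset.mem_insert, Finset.mem_singleton, not_or] at hcT hdT heT
  obtain ⟨hcS, hca, hcb⟩ := hcT
  obtain ⟨hdS, hda, hdb⟩ := hdT
  obtain ⟨heS, hea, heb⟩ := heT
  have hwc : w ≠ c := fun h => hwS (h ▸ hcS)
  have hwd : w ≠ d := fun h => hwS (h ▸ hdS)
  have hwe : w ≠ e := fun h => hwS (h ▸ heS)
  have hwa' : w ≠ a := fun h => hwS (h ▸ haS)
  have hwb' : w ≠ b := fun h => hwS (h ▸ hbS)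
  have hva : v ≠ a := fun h => hvS (h ▸ haS)
  have hvb : v ≠ b := fun h => hvS (h ▸ hbS)
  have hvc : v ≠ c := fun h => hvS (h ▸ hcS)
  have hvd : v ≠ d := fun h => hvS (h ▸ hdS)
  have hve : v ≠ e := fun h => hvS (h ▸ heS)
  -- adjacency facts
  have hac : G.Adj a c := hclique a haS c hcS (Ne.symm hca)
  have hcv : G.Adj c v := (hSnbr c hcS).symm
  have hvd2 : G.Adj v d := hSnbr d hdS
  have hdb2 : G.Adj d b := hclique d hdS b hbS hdb
  have hbw : G.Adj b w := hwb.symm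
  have hwa2 : G.Adj w a := hwa
  have hea2 : G.Adj e a := hclique e heS a haS hea
  have hec : G.Adj e c := hclique e heS c hcS (fun h => hce h.symm)
  -- build the copy of cycTri 6
  apply hfree
  let f : Fin 6 ⊕ Unit → V := Sum.elim ![a, c, v, d, b, w] (fun _ => e)
  refine ⟨⟨f, ?_⟩, ?_⟩
  · intro x y hxy
    rw [cycTri, SimpleGraph.fromRel_adj] at hxy
    obtain ⟨hne, hrel⟩ := hxy
    rcases x with i | u <;> rcases y with j | u'
    · have hij : (cycleGraph 6).Adj i j := by
        rcases hrel with h | h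
        · exact h
        · exact h.symm
      rw [SimpleGraph.cycleGraph_adj] at hij
      fin_cases i <;> fin_cases j <;>
        first
          | (exfalso; revert hij; decide)
          | exact hac | exact hac.symm
          | exact hcv | exact hcv.symm
          | exact hvd2 | exact hvd2.symm
          | exact hdb2 | exact hdb2.symm
          | exact hbw | exact hbw.symm
          | exact hwa2 | exact hwa2.symm
    · have h01 : i.val = 0 ∨ i.val = 1 := by
        rcases hrel with h | h
        · exact h
        · exact (h : False).elim
      fin_cases i <;>
        first
          | (exfalso; revert h01; decide)
          | exact hea2.symm
          | exact hec.symm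
    · have h01 : j.val = 0 ∨ j.val = 1 := by
        rcases hrel with h | h
        · exact (h : False).elim
        · exact h
      fin_cases j <;>
        first
          | (exfalso; revert h01; decide)
          | exact hea2
          | exact hec
    · cases u; cases u'; exact absurd rfl hne
  · have hvals : ∀ x : Fin 6 ⊕ Unit, ∀ y : Fin 6 ⊕ Unit, f x = f y → x ≠ y → False := by
      intro x y hxy hne
      rcases x with i | u <;> rcases y with j | u' <;>
        [ (fin_cases i <;> fin_cases j <;>
            first
              | exact hne rfl
              | exact hab hxy | exact hab hxy.symm
              | exact hca hxy | exact hca hxy.symm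
              | exact hcb hxy | exact hcb hxy.symm
              | exact hda hxy | exact hda hxy.symm
              | exact hdb hxy | exact hdb hxy.symm
              | exact hcd hxy | exact hcd hxy.symm
              | exact hde hxy | exact hde hxy.symm
              | exact hva hxy | exact hva hxy.symm
              | exact hvb hxy | exact hvb hxy.symm
              | exact hvc hxy | exact hvc hxy.symm
              | exact hvd hxy | exact hvd hxy.symm
              | exact hvw' hxy | exact hvw' hxy.symm
              | exact hwa' hxy | exact hwa' hxy.symm
              | exact hwb' hxy | exact hwb' hxy.symm
              | exact hwc hxy | exact hwc hxy.symm
              | exact hwd hxy | exact hwd hxy.symm);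
          (fin_cases i <;>
            first
              | exact hea hxy.symm | exact heb hxy.symm | exact hce hxy
              | exact hde hxy | exact hve hxy | exact hwe hxy);
          (fin_cases j <;>
            first
              | exact hea hxy | exact heb hxy | exact hce hxy.symm
              | exact hde hxy.symm | exact hve hxy.symm | exact hwe hxy.symm);
          exact hne rfl ]
    intro x y hxy
    by_contra hne
    exact hvals x y hxy hne
end
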